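/- The means I(a,b) and S(A(a,b), G(a,b)) cannot be compared: there exist distinct positive reals a, b with I(a,b) > S(A(a,b), G(a,b)), and there exist distinct positive reals a, b with I(a,b) < S(A(a,b), G(a,b)). -/

import Mathlib

noncomputable def A (a b : ℝ) : ℝ := (a + b) / 2
noncomputable def G (a b : ℝ) : ℝ := Real.sqrt (a * b)
noncomputable def S (a b : ℝ) : ℝ := (a ^ a * b ^ b) ^ (1 / (a + b))
noncomputable def I (a b : ℝ) : ℝ := (1 / Real.exp 1) * (a ^ a / b ^ b) ^ (1 / (a - b))

lemma my_log_lt (x : ℝ) (hx : 0 < x) (p q : ℕ) (hp : 0 < p) (hq : 0 < q)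
    (h : x ^ q < (2.7182818283 : ℝ) ^ p) : Real.log x < (p : ℝ) / q := by
  rw [Real.log_lt_iff_lt_exp hx]
  have he : Real.exp ((p : ℝ) / q) ^ q = Real.exp p := by
    rw [← Real.exp_nat_mul]
    congr 1
    field_simp
  have h2 : Real.exp (p : ℝ) = Real.exp 1 ^ p := by
    rw [← Real.exp_nat_mul, mul_one]
  have h3 : (2.7182818283 : ℝ) ^ p < Real.exp 1 ^ p :=
    pow_lt_pow_left₀ Real.exp_one_gt_d9 (by norm_num) hp.ne'
  refine lt_of_pow_lt_pow_left₀ q (Real.exp_pos _).le ?_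
  rw [he, h2]
  exact h.trans h3

lemma my_lt_log (x : ℝ) (hx : 0 < x) (p q : ℕ) (hp : 0 < p) (hq : 0 < q)
    (h : (2.7182818286 : ℝ) ^ p < x ^ q) : (p : ℝ) / q < Real.log x := by
  rw [Real.lt_log_iff_exp_lt hx]
  have he : Real.exp ((p : ℝ) / q) ^ q = Real.exp p := by
    rw [← Real.exp_nat_mul]
    congr 1
    field_simp
  have h2 : Real.exp (p : ℝ) = Real.exp 1 ^ p := by
    rw [← Real.exp_nat_mul, mul_one]
  have h3 : Real.exp 1 ^ p < (2.7182818286 : ℝ) ^ p :=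
    pow_lt_pow_left₀ Real.exp_one_lt_d9 (Real.exp_pos 1).le hp.ne'
  refine lt_of_pow_lt_pow_left₀ q hx.le ?_
  rw [he, h2]
  exact h3.trans h

lemma log5_lt : Real.log 5 < 333 / 200 := by
  have := my_log_lt 5 (by norm_num) 333 200 (by norm_num) (by norm_num) (by
    rw [show (2.7182818283 : ℝ) = 27182818283 / 10000000000 by norm_num, div_pow, lt_div_iff₀ (by positivity)]
    exact_mod_cast (by decide : (5:ℕ) ^ 200 * 10000000000 ^ 333 < 27182818283 ^ 333))
  convert this using 2 <;> norm_num

lemma log7_lt : Real.log 7 < 39 / 20 := by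
  have := my_log_lt 7 (by norm_num) 39 20 (by norm_num) (by norm_num) (by norm_num)
  convert this using 2 <;> norm_num

lemma lt_log7 : (97 : ℝ) / 50 < Real.log 7 := by
  have := my_lt_log 7 (by norm_num) 97 50 (by norm_num) (by norm_num) (by norm_num)
  convert this using 2 <;> norm_num

lemma lt_log197 : (527 : ℝ) / 100 < Real.log 197 := by
  have := my_lt_log 197 (by norm_num) 527 100 (by norm_num) (by norm_num) (by
    rw [show (2.7182818286 : ℝ) = 27182818286 / 10000000000 by norm_num, div_pow, div_lt_iff₀ (by positivity)]
    exact_mod_cast (by set_option maxRecDepth 100000 in decide : (27182818286:ℕ) ^ 527 < 197 ^ 100 * 10000000000 ^ 527))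
  convert this using 2 <;> norm_num

lemma log8_eq : Real.log 8 = 3 * Real.log 2 := by
  rw [show (8 : ℝ) = 2 ^ (3 : ℕ) by norm_num, Real.log_pow]
  push_cast; ring

lemma log4_eq : Real.log 4 = 2 * Real.log 2 := by
  rw [show (4 : ℝ) = 2 ^ (2 : ℕ) by norm_num, Real.log_pow]
  push_cast; ring

lemma log14_eq : Real.log 14 = Real.log 2 + Real.log 7 := by
  rw [show (14 : ℝ) = 2 * 7 by norm_num, Real.log_mul (by norm_num) (by norm_num)]

lemma log196_eq : Real.log 196 = 2 * (Real.log 2 + Real.log 7) := by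
  rw [show (196 : ℝ) = 14 ^ (2 : ℕ) by norm_num, Real.log_pow, log14_eq]
  push_cast; ring

theorem stmt_12 :
    (∃ a b : ℝ, 0 < a ∧ 0 < b ∧ a ≠ b ∧ I a b > S (A a b) (G a b)) ∧
    (∃ a b : ℝ, 0 < a ∧ 0 < b ∧ a ≠ b ∧ I a b < S (A a b) (G a b)) := by
  constructor
  · refine ⟨8, 2, by norm_num, by norm_num, by norm_num, ?_⟩
    have hA : A 8 2 = 5 := by unfold A; norm_num
    have hG : G 8 2 = 4 := by
      unfold G
      rw [show (8 : ℝ) * 2 = 4 ^ 2 by norm_num, Real.sqrt_sq (by norm_num)]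
    rw [hA, hG]
    have hSpos : 0 < S 5 4 := by unfold S; positivity
    have hIpos : 0 < I 8 2 := by unfold I; positivity
    have hlogS : Real.log (S 5 4) = (1 / 9) * (5 * Real.log 5 + 8 * Real.log 2) := by
      unfold S
      rw [show (5 : ℝ) + 4 = 9 by norm_num,
        Real.log_rpow (by positivity),
        Real.log_mul (by positivity) (by positivity),
        Real.log_rpow (by norm_num), Real.log_rpow (by norm_num), log4_eq]
      ring
    have hlogI : Real.log (I 8 2) = -1 + (11 / 3) * Real.log 2 := by
      unfold I
      rw [Real.log_mul (by positivity) (by positivity),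
        one_div, Real.log_inv, Real.log_exp,
        show (8 : ℝ) - 2 = 6 by norm_num,
        Real.log_rpow (by positivity),
        Real.log_div (by positivity) (by positivity),
        Real.log_rpow (by norm_num), Real.log_rpow (by norm_num), log8_eq]
      ring
    have key : Real.log (S 5 4) < Real.log (I 8 2) := by
      rw [hlogS, hlogI]
      have h1 := Real.log_two_gt_d9
      have h2 := Real.log_two_lt_d9
      have h3 := log5_lt
      linarith
    exact (Real.log_lt_log_iff hSpos hIpos).mp key
  · refine ⟨196, 1, by norm_num, by norm_num, by norm_num, ?_⟩
    have hA : A 196 1 = 197 / 2 := by unfold A; norm_num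
    have hG : G 196 1 = 14 := by
      unfold G
      rw [show (196 : ℝ) * 1 = 14 ^ 2 by norm_num, Real.sqrt_sq (by norm_num)]
    rw [hA, hG]
    have hSpos : 0 < S (197 / 2) 14 := by unfold S; positivity
    have hIpos : 0 < I 196 1 := by unfold I; positivity
    have hlogS : Real.log (S (197 / 2) 14) =
        (2 / 225) * ((197 / 2) * (Real.log 197 - Real.log 2) + 14 * (Real.log 2 + Real.log 7)) := by
      unfold S
      rw [show (197 : ℝ) / 2 + 14 = 225 / 2 by norm_num,
        show (1 : ℝ) / (225 / 2) = 2 / 225 by norm_num,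
        Real.log_rpow (by positivity),
        Real.log_mul (by positivity) (by positivity),
        Real.log_rpow (by norm_num), Real.log_rpow (by norm_num),
        Real.log_div (by norm_num) (by norm_num), log14_eq]
      try ring
    have hlogI : Real.log (I 196 1) = -1 + (392 / 195) * (Real.log 2 + Real.log 7) := by
      unfold I
      rw [Real.log_mul (by positivity) (by positivity),
        one_div, Real.log_inv, Real.log_exp, Real.one_rpow,
        show (196 : ℝ) - 1 = 195 by norm_num, div_one,
        Real.log_rpow (by norm_num), Real.log_rpow (by norm_num), log196_eq]
      ring
    have key : Real.log (I 196 1) < Real.log (S (197 / 2) 14) := by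
      rw [hlogS, hlogI]
      have h1 := Real.log_two_gt_d9
      have h2 := Real.log_two_lt_d9
      have h3 := log7_lt
      have h4 := lt_log7
      have h5 := lt_log197
      linarith
    exact (Real.log_lt_log_iff hIpos hSpos).mp key
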